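/- Fix a natural number v and a real number λ ≥ 0, and let r : ℕ → ℕ be a sequence such that n · exp(−(r n)/n) tends to λ as n → ∞. Then the sequence S_v(n) = C(n, v) · (1 − v/n)^{r n} tends to λ^v / v! as n → ∞. -/

import Mathlib

open Filter Real Finset

private lemma one_sub_mul_exp_le (x : ℝ) : (1 - x) * Real.exp x ≤ 1 := by
  have h : 1 - x ≤ Real.exp (-x) := by
    have := Real.add_one_le_exp (-x); linarith
  calc (1 - x) * Real.exp x ≤ Real.exp (-x) * Real.exp x :=
        mul_le_mul_of_nonneg_right h (Real.exp_nonneg x)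
    _ = 1 := by rw [← Real.exp_add]; simp

private lemma log_one_sub_ge {x : ℝ} (_hx : 0 ≤ x) (hx1 : x < 1) :
    -x^2 / (1 - x) ≤ Real.log (1 - x) + x := by
  have h1 : 0 < 1 - x := by linarith
  have := Real.one_sub_inv_le_log_of_pos h1
  have h2 : 1 - (1 - x)⁻¹ = -x / (1 - x) := by field_simp; ring
  rw [h2] at this
  have : -x / (1-x) + x ≤ Real.log (1 - x) + x := by linarith
  refine le_trans (le_of_eq ?_) this
  field_simp; ring

theorem stmt_16 (v : ℕ) (lam : ℝ) (hlam : 0 ≤ lam) (r : ℕ → ℕ)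
    (hr : Filter.Tendsto (fun n : ℕ => (n : ℝ) * Real.exp (-(r n : ℝ) / (n : ℝ)))
      Filter.atTop (nhds lam)) :
    Filter.Tendsto
      (fun n : ℕ => (n.choose v : ℝ) * (1 - (v : ℝ) / (n : ℝ)) ^ (r n))
      Filter.atTop (nhds (lam ^ v / (Nat.factorial v : ℝ))) := by
  rcases Nat.eq_zero_or_pos v with rfl | hv
  · simpa using (tendsto_const_nhds : Tendsto (fun _ : ℕ => (1:ℝ)) atTop (nhds 1))
  set a : ℕ → ℝ := fun n => (n : ℝ) * Real.exp (-(r n : ℝ) / (n : ℝ)) with ha_def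
  set g : ℕ → ℝ := fun n =>
    (∏ i ∈ Finset.range v, (1 - (i : ℝ) / n)) *
      ((1 - (v : ℝ) / n) * Real.exp ((v : ℝ) / n)) ^ (r n) with hg_def
  -- the key identity, eventually
  have hident : ∀ n : ℕ, v + 1 ≤ n →
      (n.choose v : ℝ) * (1 - (v : ℝ) / (n : ℝ)) ^ (r n)
        = a n ^ v * g n / (Nat.factorial v : ℝ) := by
    intro n hn
    have hn0 : (0:ℝ) < (n:ℝ) := by exact_mod_cast Nat.pos_of_ne_zero (by omega)
    have hfac : (Nat.factorial v : ℝ) ≠ 0 := by positivity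
    have hchoose : (Nat.factorial v : ℝ) * (n.choose v : ℝ)
        = ∏ i ∈ Finset.range v, ((n : ℝ) - (i : ℝ)) := by
      have := Nat.descFactorial_eq_factorial_mul_choose n v
      have h2 := Nat.descFactorial_eq_prod_range n v
      have : (Nat.factorial v) * (n.choose v) = ∏ i ∈ Finset.range v, (n - i) := by
        rw [← this, h2]
      calc (Nat.factorial v : ℝ) * (n.choose v : ℝ)
          = ((∏ i ∈ Finset.range v, (n - i) : ℕ) : ℝ) := by push_cast [← this]; ring
        _ = ∏ i ∈ Finset.range v, ((n : ℝ) - (i : ℝ)) := by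
            rw [Nat.cast_prod]
            refine Finset.prod_congr rfl fun i hi => ?_
            have : i ≤ n := le_trans (le_of_lt (Finset.mem_range.1 hi)) (by omega)
            push_cast [Nat.cast_sub this]; ring
    have key : a n ^ v * g n = (∏ i ∈ Finset.range v, ((n : ℝ) - (i : ℝ)))
        * (1 - (v : ℝ) / (n : ℝ)) ^ (r n) := by
      have e3 : Real.exp (-(r n : ℝ) / n) ^ v * Real.exp ((v : ℝ) / n) ^ (r n) = 1 := by
        rw [← Real.exp_nat_mul, ← Real.exp_nat_mul, ← Real.exp_add]
        rw [Real.exp_eq_one_iff]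
        field_simp
        ring
      have e4 : (n:ℝ)^v * (∏ i ∈ Finset.range v, (1 - (i : ℝ) / n))
          = ∏ i ∈ Finset.range v, ((n : ℝ) - (i : ℝ)) := by
        calc (n:ℝ)^v * (∏ i ∈ Finset.range v, (1 - (i : ℝ) / n))
            = ∏ i ∈ Finset.range v, ((n:ℝ) * (1 - (i : ℝ) / n)) := by
              rw [Finset.prod_mul_distrib, Finset.prod_const, Finset.card_range]
          _ = _ := by
              refine Finset.prod_congr rfl fun i hi => ?_
              field_simp
      show ((n:ℝ) * Real.exp (-(r n : ℝ) / n)) ^ v *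
          ((∏ i ∈ Finset.range v, (1 - (i : ℝ) / n)) *
            ((1 - (v : ℝ) / n) * Real.exp ((v : ℝ) / n)) ^ (r n)) = _
      have expand : ((n:ℝ) * Real.exp (-(r n : ℝ) / n)) ^ v *
          ((∏ i ∈ Finset.range v, (1 - (i : ℝ) / n)) *
            ((1 - (v : ℝ) / n) * Real.exp ((v : ℝ) / n)) ^ (r n))
          = ((n:ℝ)^v * (∏ i ∈ Finset.range v, (1 - (i : ℝ) / n)))
            * (1 - (v : ℝ) / n) ^ (r n)
            * (Real.exp (-(r n : ℝ) / n) ^ v * Real.exp ((v : ℝ) / n) ^ (r n)) := by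
        rw [mul_pow, mul_pow]; ring
      rw [expand, e3, e4, mul_one]
    rw [eq_div_iff hfac, key, ← hchoose]
    ring
  -- tendsto of a ^ v
  have hav : Tendsto (fun n => a n ^ v) atTop (nhds (lam ^ v)) := hr.pow v
  -- bounds on g
  have hg_le : ∀ n : ℕ, v + 1 ≤ n → g n ≤ 1 := by
    intro n hn
    have hn0 : (0:ℝ) < (n:ℝ) := by exact_mod_cast Nat.pos_of_ne_zero (by omega)
    have hvn : (v : ℝ) / n ≤ 1 := by
      rw [div_le_one hn0]; exact_mod_cast by omega
    have hP : (∏ i ∈ Finset.range v, (1 - (i : ℝ) / n)) ≤ 1 := by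
      apply Finset.prod_le_one
      · intro i hi
        have : (i:ℝ) / n ≤ 1 := by
          rw [div_le_one hn0]
          exact_mod_cast le_of_lt (lt_of_lt_of_le (Finset.mem_range.1 hi) (by omega))
        linarith
      · intro i hi; have : (0:ℝ) ≤ (i:ℝ)/n := by positivity
        linarith [ (div_le_one hn0).mpr (show (i:ℝ) ≤ n by exact_mod_cast le_of_lt (lt_of_lt_of_le (Finset.mem_range.1 hi) (by omega))) ]
    have hP0 : 0 ≤ (∏ i ∈ Finset.range v, (1 - (i : ℝ) / n)) := by
      apply Finset.prod_nonneg
      intro i hi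
      have : (i:ℝ) / n ≤ 1 := by
        rw [div_le_one hn0]
        exact_mod_cast le_of_lt (lt_of_lt_of_le (Finset.mem_range.1 hi) (by omega))
      linarith
    have hb0 : 0 ≤ (1 - (v : ℝ) / n) * Real.exp ((v : ℝ) / n) := by
      apply mul_nonneg (by linarith) (Real.exp_nonneg _)
    have hb1 : ((1 - (v : ℝ) / n) * Real.exp ((v : ℝ) / n)) ^ (r n) ≤ 1 :=
      pow_le_one₀ hb0 (one_sub_mul_exp_le _)
    calc g n ≤ 1 * 1 := by
          refine mul_le_mul hP hb1 (pow_nonneg hb0 _) (by norm_num)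
      _ = 1 := by ring
  have hg_nonneg : ∀ n : ℕ, v + 1 ≤ n → 0 ≤ g n := by
    intro n hn
    have hn0 : (0:ℝ) < (n:ℝ) := by exact_mod_cast Nat.pos_of_ne_zero (by omega)
    apply mul_nonneg
    · apply Finset.prod_nonneg
      intro i hi
      have : (i:ℝ) / n ≤ 1 := by
        rw [div_le_one hn0]
        exact_mod_cast le_of_lt (lt_of_lt_of_le (Finset.mem_range.1 hi) (by omega))
      linarith
    · apply pow_nonneg
      apply mul_nonneg _ (Real.exp_nonneg _)
      have : (v : ℝ) / n ≤ 1 := by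
        rw [div_le_one hn0]; exact_mod_cast by omega
      linarith
  -- main limit: a^v * g → lam^v
  have hmain : Tendsto (fun n => a n ^ v * g n) atTop (nhds (lam ^ v)) := by
    rcases eq_or_lt_of_le hlam with heq | hpos
    · -- lam = 0
      rw [← heq] at hav ⊢
      rw [zero_pow hv.ne'] at hav ⊢
      refine tendsto_of_tendsto_of_tendsto_of_le_of_le' tendsto_const_nhds hav ?_ ?_
      · filter_upwards [eventually_ge_atTop (v + 1)] with n hn
        have han : 0 ≤ a n := mul_nonneg n.cast_nonneg (Real.exp_nonneg _)
        exact mul_nonneg (pow_nonneg han v) (hg_nonneg n hn)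
      · filter_upwards [eventually_ge_atTop (v + 1)] with n hn
        have han : 0 ≤ a n := mul_nonneg n.cast_nonneg (Real.exp_nonneg _)
        calc a n ^ v * g n ≤ a n ^ v * 1 :=
              mul_le_mul_of_nonneg_left (hg_le n hn) (pow_nonneg han v)
          _ = a n ^ v := mul_one _
    · -- lam > 0: g → 1
      have hg1 : Tendsto g atTop (nhds 1) := by
        have hP : Tendsto (fun n : ℕ => ∏ i ∈ Finset.range v, (1 - (i:ℝ)/n)) atTop
            (nhds 1) := by
          have h1 : Tendsto (fun n : ℕ => ∏ i ∈ Finset.range v, (1 - (i:ℝ)/n)) atTop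
              (nhds (∏ _i ∈ Finset.range v, (1:ℝ))) := by
            refine tendsto_finset_prod _ fun i _ => ?_
            have h2 : Tendsto (fun n : ℕ => (i:ℝ)/n) atTop (nhds 0) :=
              tendsto_const_div_atTop_nhds_zero_nat _
            simpa using tendsto_const_nhds.sub h2
          simpa using h1
        have hcast : Tendsto (fun n : ℕ => (n:ℝ) - v) atTop atTop :=
          tendsto_atTop_add_const_right _ _ tendsto_natCast_atTop_atTop
        have hloga : Tendsto (fun n : ℕ => Real.log (a n) / ((n:ℝ) - v)) atTop (nhds 0) :=
          Tendsto.div_atTop (hr.log hpos.ne') hcast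
        have hlogn : Tendsto (fun n : ℕ => Real.log n / ((n:ℝ) - v)) atTop (nhds 0) := by
          have hA : Tendsto (fun n : ℕ => Real.log n / (n:ℝ)) atTop (nhds 0) :=
            (Real.isLittleO_log_id_atTop.tendsto_div_nhds_zero).comp tendsto_natCast_atTop_atTop
          have hB : Tendsto (fun n : ℕ => (n:ℝ) / ((n:ℝ) - v)) atTop (nhds 1) := by
            have h3 : Tendsto (fun n : ℕ => 1 + (v:ℝ) / ((n:ℝ) - v)) atTop (nhds (1 + 0)) :=
              tendsto_const_nhds.add (Tendsto.div_atTop tendsto_const_nhds hcast)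
            rw [add_zero] at h3
            refine h3.congr' ?_
            filter_upwards [eventually_ge_atTop (v + 1)] with n hn
            have hnv : ((n:ℝ) - v) ≠ 0 := by
              have : (v:ℝ) + 1 ≤ (n:ℝ) := by exact_mod_cast hn
              intro h; rw [sub_eq_zero] at h; linarith
            field_simp
            ring
          have := hA.mul hB
          rw [mul_one] at this
          refine this.congr' ?_
          filter_upwards [eventually_ge_atTop (v + 1)] with n hn
          have hn0 : ((n:ℝ)) ≠ 0 := by
            have : (0:ℝ) < (n:ℝ) := by exact_mod_cast Nat.pos_of_ne_zero (by omega)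
            exact ne_of_gt this
          have hnv : ((n:ℝ) - v) ≠ 0 := by
            have h4 : (v:ℝ) + 1 ≤ (n:ℝ) := by exact_mod_cast hn
            intro h; rw [sub_eq_zero] at h; linarith
          field_simp
        have hL : Tendsto (fun n : ℕ =>
            -(v:ℝ)^2 * (Real.log n / ((n:ℝ) - v) - Real.log (a n) / ((n:ℝ) - v))) atTop
            (nhds 0) := by
          have := (hlogn.sub hloga).const_mul (-(v:ℝ)^2)
          simpa using this
        have hE : Tendsto (fun n : ℕ =>
            (r n : ℝ) * (Real.log (1 - (v:ℝ)/n) + (v:ℝ)/n)) atTop (nhds 0) := by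
          refine tendsto_of_tendsto_of_tendsto_of_le_of_le' hL tendsto_const_nhds ?_ ?_
          · filter_upwards [eventually_ge_atTop (v + 1)] with n hn
            have hn0 : (0:ℝ) < (n:ℝ) := by exact_mod_cast Nat.pos_of_ne_zero (by omega)
            have hnv : (v:ℝ) + 1 ≤ (n:ℝ) := by exact_mod_cast hn
            have hx1 : (v:ℝ)/n < 1 := by rw [div_lt_one hn0]; linarith
            have hx0 : (0:ℝ) ≤ (v:ℝ)/n := by positivity
            have hlog := log_one_sub_ge hx0 hx1
            have hrge : (r n : ℝ) * (-((v:ℝ)/n)^2 / (1 - (v:ℝ)/n))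
                ≤ (r n : ℝ) * (Real.log (1 - (v:ℝ)/n) + (v:ℝ)/n) :=
              mul_le_mul_of_nonneg_left hlog (by positivity)
            refine le_trans (le_of_eq ?_) hrge
            -- L n = r n * (-(v/n)^2/(1 - v/n)) using r n = n * (log n - log a n)
            have hrn : (r n : ℝ) = (n:ℝ) * (Real.log n - Real.log (a n)) := by
              have hexp : Real.log (a n) = Real.log n + (-(r n : ℝ)/n) := by
                rw [ha_def]
                rw [Real.log_mul (ne_of_gt hn0) (Real.exp_ne_zero _), Real.log_exp]
              have : Real.log n - Real.log (a n) = (r n : ℝ)/n := by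
                rw [hexp]; ring
              rw [this]
              field_simp
            rw [hrn]
            have hnv0 : ((n:ℝ) - v) ≠ 0 := by intro h; rw [sub_eq_zero] at h; linarith
            field_simp
          · filter_upwards [eventually_ge_atTop (v + 1)] with n hn
            have hn0 : (0:ℝ) < (n:ℝ) := by exact_mod_cast Nat.pos_of_ne_zero (by omega)
            have hnv : (v:ℝ) + 1 ≤ (n:ℝ) := by exact_mod_cast hn
            have hb : (0:ℝ) < 1 - (v:ℝ)/n := by
              rw [sub_pos, div_lt_one hn0]; linarith
            have := Real.log_le_sub_one_of_pos hb
            have hle : Real.log (1 - (v:ℝ)/n) + (v:ℝ)/n ≤ 0 := by linarith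
            exact mul_nonpos_of_nonneg_of_nonpos (by positivity) hle
        have hQ : Tendsto (fun n : ℕ =>
            ((1 - (v:ℝ)/n) * Real.exp ((v:ℝ)/n)) ^ (r n)) atTop (nhds 1) := by
          have hcomp := (Real.continuous_exp.tendsto 0).comp hE
          rw [Real.exp_zero] at hcomp
          refine hcomp.congr' ?_
          filter_upwards [eventually_ge_atTop (v + 1)] with n hn
          have hn0 : (0:ℝ) < (n:ℝ) := by exact_mod_cast Nat.pos_of_ne_zero (by omega)
          have hnv : (v:ℝ) + 1 ≤ (n:ℝ) := by exact_mod_cast hn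
          have hb : (0:ℝ) < 1 - (v:ℝ)/n := by
            rw [sub_pos, div_lt_one hn0]; linarith
          show Real.exp ((r n : ℝ) * (Real.log (1 - (v:ℝ)/n) + (v:ℝ)/n)) = _
          rw [Real.exp_nat_mul, Real.exp_add, Real.exp_log hb]
        have := hP.mul hQ
        rw [mul_one] at this
        exact this
      have := hav.mul hg1
      simpa using this
  have : Tendsto (fun n => a n ^ v * g n / (Nat.factorial v : ℝ)) atTop
      (nhds (lam ^ v / (Nat.factorial v : ℝ))) := hmain.div_const _
  refine this.congr' ?_
  filter_upwards [eventually_atTop.2 ⟨v + 1, fun n hn => hident n hn⟩] with n h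
  exact h.symm
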